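/- For nonnegative reals $p_1,p_2,p_3$ with $p_1+p_2+p_3=1$, and for any indices $i,j,k \in \{1,2,3\}$ with $j \neq k$, the binary entropy satisfies $H_b(p_i) \leq H_b(p_j) + H_b(p_k)$. -/

import Mathlib

open Real

/-- Binary entropy function with base-2 logarithms. -/
noncomputable def Hb (t : ℝ) : ℝ := -(t * Real.logb 2 t) - (1 - t) * Real.logb 2 (1 - t)

/-- natural-log version of binary entropy -/
noncomputable def G (t : ℝ) : ℝ := -(t * Real.log t) - (1 - t) * Real.log (1 - t)

lemma G_nonneg {t : ℝ} (h0 : 0 ≤ t) (h1 : t ≤ 1) : 0 ≤ G t := by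
  unfold G
  have h2 : t * Real.log t ≤ 0 :=
    mul_nonpos_of_nonneg_of_nonpos h0 (Real.log_nonpos h0 h1)
  have h3 : (1 - t) * Real.log (1 - t) ≤ 0 :=
    mul_nonpos_of_nonneg_of_nonpos (by linarith) (Real.log_nonpos (by linarith) (by linarith))
  linarith

lemma G_subadd (a b : ℝ) (ha : 0 ≤ a) (hb : 0 ≤ b) (hab : a + b ≤ 1) :
    G (a + b) ≤ G a + G b := by
  rcases ha.eq_or_lt with rfl | ha'
  · have : G 0 = 0 := by simp [G]
    simp [this]
  rcases hb.eq_or_lt with rfl | hb'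
  · have : G 0 = 0 := by simp [G]
    simp [this]
  rcases hab.eq_or_lt with h1 | h1
  · have : G (a + b) = 0 := by simp [G, h1]
    rw [this]
    have := G_nonneg ha (by linarith : a ≤ 1)
    have := G_nonneg hb (by linarith : b ≤ 1)
    linarith
  -- main case: 0 < a, 0 < b, a + b < 1
  have hc : 0 < 1 - (a + b) := by linarith
  have h1a : 0 < 1 - a := by linarith
  have h1b : 0 < 1 - b := by linarith
  have key : G a + G b - G (a + b) =
      a * (Real.log (a + b) - Real.log a - Real.log (1 - b))
      + b * (Real.log (a + b) - Real.log b - Real.log (1 - a))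
      + (1 - (a + b)) * (Real.log (1 - (a + b)) - Real.log (1 - a) - Real.log (1 - b)) := by
    unfold G; ring
  -- term 2 nonneg
  have t2 : 0 ≤ b * (Real.log (a + b) - Real.log b - Real.log (1 - a)) := by
    apply mul_nonneg hb
    have e : Real.log b + Real.log (1 - a) = Real.log (b * (1 - a)) :=
      (Real.log_mul hb'.ne' h1a.ne').symm
    have h : Real.log (b * (1 - a)) ≤ Real.log (a + b) :=
      Real.log_le_log (by positivity) (by nlinarith)
    linarith
  -- term 1 ≥ a*b
  have t1 : a * b ≤ a * (Real.log (a + b) - Real.log a - Real.log (1 - b)) := by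
    have l1 : Real.log a ≤ Real.log (a + b) := Real.log_le_log ha' (by linarith)
    have l2 : Real.log (1 - b) ≤ (1 - b) - 1 := Real.log_le_sub_one_of_pos h1b
    have : b ≤ Real.log (a + b) - Real.log a - Real.log (1 - b) := by linarith
    nlinarith
  -- term 3 ≥ -(a*b)
  have t3 : -(a * b) ≤ (1 - (a + b)) * (Real.log (1 - (a + b)) - Real.log (1 - a) - Real.log (1 - b)) := by
    have hprod : (1 - a) * (1 - b) = (1 - (a + b)) + a * b := by ring
    have hpos : 0 < (1 - (a + b)) + a * b := by nlinarith
    have l1 : Real.log (1 - a) + Real.log (1 - b) = Real.log ((1 - (a + b)) + a * b) := by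
      rw [← Real.log_mul h1a.ne' h1b.ne', hprod]
    have l2 : Real.log (((1 - (a + b)) + a * b) / (1 - (a + b))) ≤
        ((1 - (a + b)) + a * b) / (1 - (a + b)) - 1 :=
      Real.log_le_sub_one_of_pos (by positivity)
    rw [Real.log_div hpos.ne' hc.ne'] at l2
    have l3 : ((1 - (a + b)) + a * b) / (1 - (a + b)) - 1 = (a * b) / (1 - (a + b)) := by
      field_simp
      ring
    rw [l3] at l2
    have l4 : Real.log (1 - (a + b)) - Real.log (1 - a) - Real.log (1 - b) ≥
        -((a * b) / (1 - (a + b))) := by linarith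
    have l5 : (1 - (a + b)) * (-((a * b) / (1 - (a + b)))) = -(a * b) := by
      field_simp
    calc -(a * b) = (1 - (a + b)) * (-((a * b) / (1 - (a + b)))) := l5.symm
      _ ≤ _ := by
          apply mul_le_mul_of_nonneg_left l4 hc.le
  linarith

lemma Hb_eq (t : ℝ) : Hb t = G t / Real.log 2 := by
  unfold Hb G Real.logb; ring

lemma Hb_nonneg {t : ℝ} (h0 : 0 ≤ t) (h1 : t ≤ 1) : 0 ≤ Hb t := by
  rw [Hb_eq]
  exact div_nonneg (G_nonneg h0 h1) (Real.log_nonneg (by norm_num))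

lemma Hb_subadd {a b : ℝ} (ha : 0 ≤ a) (hb : 0 ≤ b) (hab : a + b ≤ 1) :
    Hb (a + b) ≤ Hb a + Hb b := by
  rw [Hb_eq, Hb_eq, Hb_eq, ← add_div]
  have h2 : (0:ℝ) < Real.log 2 := Real.log_pos (by norm_num)
  gcongr
  exact G_subadd a b ha hb hab

lemma Hb_symm (t : ℝ) : Hb (1 - t) = Hb t := by
  unfold Hb
  rw [sub_sub_cancel]
  ring

/-- the fully-distinct case -/
lemma Hb_tri {a b c : ℝ} (ha : 0 ≤ a) (hb : 0 ≤ b) (hc : 0 ≤ c)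
    (h : a + b + c = 1) : Hb a ≤ Hb b + Hb c := by
  have : a = 1 - (b + c) := by linarith
  rw [this, Hb_symm]
  exact Hb_subadd hb hc (by linarith)

/-- For nonnegative reals `p₁,p₂,p₃` summing to 1, `Hb (p i) ≤ Hb (p j) + Hb (p k)`
whenever `j ≠ k`. -/
theorem stmt0 (p : Fin 3 → ℝ) (hnn : ∀ i, 0 ≤ p i) (hsum : ∑ i, p i = 1)
    (i j k : Fin 3) (hjk : j ≠ k) :
    Hb (p i) ≤ Hb (p j) + Hb (p k) := by
  rw [Fin.sum_univ_three] at hsum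
  have h0 := hnn 0; have h1 := hnn 1; have h2 := hnn 2
  have b0 : p 0 ≤ 1 := by linarith
  have b1 : p 1 ≤ 1 := by linarith
  have b2 : p 2 ≤ 1 := by linarith
  fin_cases i <;> fin_cases j <;> fin_cases k <;> simp_all <;>
    first
    | exact Hb_nonneg (hnn _) (by assumption)
    | exact Hb_tri (hnn _) (hnn _) (hnn _) (by linarith)
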